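/- Under the list-experiment model with misreporting (Assumptions 1 and 2) with equal misreporting probabilities p₀ = p₁ = p, and with the control group additionally answering the sensitive question directly with reporting errors q₁, q₀ ∈ [0,1] (so that the observed probability of an affirmative direct answer is Pr(X=1) = (1−q₁)·δ + q₀·(1−δ)), the validation condition Pr(X=1) = E(Y₁) − E(Y₀) holds if and only if (1−q₁)·δ + q₀·(1−δ) = δ + p·(1−2δ)/2, where E(Y₀) = ∑_{j=0}^{J} j·P₀(j) and E(Y₁) = ∑_{j=0}^{J+1} j·P₁(j). (Corollary 2.) -/

import Mathlib

lemma myIcc_succ (a b : ℤ) (h : a ≤ b + 1) :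
    Finset.Icc a (b+1) = insert (b+1) (Finset.Icc a b) := by
  ext x; simp only [Finset.mem_Icc, Finset.mem_insert]; omega

lemma mySum_Icc_succ (f : ℤ → ℝ) (a b : ℤ) (h : a ≤ b + 1) :
    ∑ j ∈ Finset.Icc a (b+1), f j = f (b+1) + ∑ j ∈ Finset.Icc a b, f j := by
  rw [myIcc_succ a b h, Finset.sum_insert (by simp)]

lemma myGauss (n : ℕ) : ∑ j ∈ Finset.Icc (0:ℤ) (n:ℤ), (j:ℝ) = n*(n+1)/2 := by
  induction n with
  | zero => simp
  | succ k ih =>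
      rw [show ((k+1:ℕ):ℤ) = (k:ℤ)+1 by push_cast; ring,
        mySum_Icc_succ _ _ _ (by positivity), ih]
      push_cast; ring

lemma myShift (f : ℤ → ℝ) (N : ℤ) :
    ∑ j ∈ Finset.Icc (0:ℤ) (N+1), f j = ∑ i ∈ Finset.Icc (-1:ℤ) N, f (i+1) := by
  have h : Finset.Icc (0:ℤ) (N+1) = Finset.map (addRightEmbedding 1) (Finset.Icc (-1) N) := by
    rw [Finset.map_add_right_Icc]; norm_num
  rw [h, Finset.sum_map]
  simp [addRightEmbedding]

/-- Corollary 2: with equal list-experiment misreporting probability `p` and direct-question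
reporting errors `q₁, q₀ ∈ [0,1]`, the validation condition `Pr(X=1) = E(Y₁) − E(Y₀)` holds
iff `(1−q₁)·δ + q₀·(1−δ) = δ + p·(1−2δ)/2`. -/
theorem list_experiment_modified_validation_condition
    (J : ℕ) (hJ : 1 ≤ J)
    (P : ℤ → ℝ)
    (hPzero : ∀ j : ℤ, j < 0 ∨ (J : ℤ) < j → P j = 0)
    (hPnonneg : ∀ j : ℤ, 0 ≤ P j)
    (hPsum : ∑ j ∈ Finset.Icc (0 : ℤ) (J : ℤ), P j = 1)
    (δ p : ℝ)
    (hδ : 0 ≤ δ ∧ δ ≤ 1) (hp : 0 ≤ p ∧ p < 1)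
    (q₁ q₀ : ℝ) (hq₁ : 0 ≤ q₁ ∧ q₁ ≤ 1) (hq₀ : 0 ≤ q₀ ∧ q₀ ≤ 1)
    (PrX1 : ℝ) (hPrX1 : PrX1 = (1 - q₁) * δ + q₀ * (1 - δ))
    (P₀ P₁ : ℤ → ℝ)
    (hP₀ : ∀ j : ℤ, 0 ≤ j → j ≤ (J : ℤ) →
      P₀ j = (1 - p) * P j + p / ((J : ℝ) + 1))
    (hP₁ : ∀ j : ℤ, 0 ≤ j → j ≤ (J : ℤ) + 1 →
      P₁ j = (1 - p) * (δ * P (j - 1) + (1 - δ) * P j) + p / ((J : ℝ) + 2)) :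
    (PrX1 =
        (∑ j ∈ Finset.Icc (0 : ℤ) ((J : ℤ) + 1), (j : ℝ) * P₁ j) -
          (∑ j ∈ Finset.Icc (0 : ℤ) (J : ℤ), (j : ℝ) * P₀ j)) ↔
      (1 - q₁) * δ + q₀ * (1 - δ) = δ + p * (1 - 2 * δ) / 2 := by
  set A : ℝ := ∑ j ∈ Finset.Icc (0 : ℤ) (J : ℤ), (j : ℝ) * P j with hA
  have hJ1 : ((J:ℝ) + 1) ≠ 0 := by positivity
  have hJ2 : ((J:ℝ) + 2) ≠ 0 := by positivity
  -- control-group expectation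
  have hE0 : ∑ j ∈ Finset.Icc (0 : ℤ) (J : ℤ), (j : ℝ) * P₀ j
      = (1 - p) * A + p / ((J:ℝ)+1) * ((J:ℝ)*((J:ℝ)+1)/2) := by
    have hc : ∀ j ∈ Finset.Icc (0:ℤ) (J:ℤ),
        (j : ℝ) * P₀ j = (1 - p) * ((j:ℝ) * P j) + p / ((J:ℝ)+1) * (j:ℝ) := by
      intro j hj
      rw [Finset.mem_Icc] at hj
      rw [hP₀ j hj.1 hj.2]; ring
    rw [Finset.sum_congr rfl hc, Finset.sum_add_distrib, ← Finset.mul_sum, ← Finset.mul_sum,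
      myGauss J, ← hA]
  -- shift sum
  have hS1 : ∑ j ∈ Finset.Icc (0:ℤ) ((J:ℤ)+1), (j : ℝ) * P (j - 1) = A + 1 := by
    rw [myShift (fun j => (j:ℝ) * P (j-1)) (J:ℤ)]
    have hins : Finset.Icc (-1:ℤ) (J:ℤ) = insert (-1) (Finset.Icc 0 (J:ℤ)) := by
      ext x; simp only [Finset.mem_Icc, Finset.mem_insert]; omega
    rw [hins, Finset.sum_insert (by simp)]
    simp only [add_sub_cancel_right]
    have : ∀ i ∈ Finset.Icc (0:ℤ) (J:ℤ),
        ((i+1 : ℤ) : ℝ) * P i = (i:ℝ) * P i + P i := by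
      intro i _; push_cast; ring
    rw [Finset.sum_congr rfl this, Finset.sum_add_distrib, hPsum, ← hA]
    norm_num
  have hS2 : ∑ j ∈ Finset.Icc (0:ℤ) ((J:ℤ)+1), (j : ℝ) * P j = A := by
    rw [mySum_Icc_succ _ _ _ (by positivity), hPzero ((J:ℤ)+1) (Or.inr (by omega)), ← hA]
    ring
  have hS3 : ∑ j ∈ Finset.Icc (0:ℤ) ((J:ℤ)+1), (j : ℝ)
      = ((J:ℝ)+1)*((J:ℝ)+2)/2 := by
    have := myGauss (J+1)
    rw [show ((J+1:ℕ):ℤ) = (J:ℤ)+1 by push_cast; ring] at this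
    rw [this]; push_cast; ring
  -- treatment-group expectation
  have hE1 : ∑ j ∈ Finset.Icc (0 : ℤ) ((J : ℤ) + 1), (j : ℝ) * P₁ j
      = (1-p)*δ*(A+1) + (1-p)*(1-δ)*A + p/((J:ℝ)+2)*(((J:ℝ)+1)*((J:ℝ)+2)/2) := by
    have hc : ∀ j ∈ Finset.Icc (0:ℤ) ((J:ℤ)+1),
        (j : ℝ) * P₁ j = (1-p)*δ*((j:ℝ)*P (j-1)) + (1-p)*(1-δ)*((j:ℝ)*P j)
          + p/((J:ℝ)+2)*(j:ℝ) := by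
      intro j hj
      rw [Finset.mem_Icc] at hj
      rw [hP₁ j hj.1 hj.2]; ring
    rw [Finset.sum_congr rfl hc, Finset.sum_add_distrib, Finset.sum_add_distrib,
      ← Finset.mul_sum, ← Finset.mul_sum, ← Finset.mul_sum, hS1, hS2, hS3]
  have hdiff : (∑ j ∈ Finset.Icc (0 : ℤ) ((J : ℤ) + 1), (j : ℝ) * P₁ j) -
      (∑ j ∈ Finset.Icc (0 : ℤ) (J : ℤ), (j : ℝ) * P₀ j) = δ + p * (1 - 2 * δ) / 2 := by
    rw [hE1, hE0]
    field_simp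
    ring
  rw [hPrX1, hdiff]
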